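/- arXiv:2510.26619 — 2 statements merged into one kernel-verified Lean document; each statement's English description precedes it below -/
import Mathlib

section
/- In a 4-Legendrian rack (in Kimura's sense, with cusp maps u_l, u_r, d_l, d_r), one has d_l = u_r⁻¹ ∘ π⁻¹ and d_r = u_l⁻¹ ∘ π⁻¹, where π is the kink map. -/
/-- In a 4-Legendrian rack in Kimura's sense, `d_l = u_r⁻¹ ∘ π⁻¹` and
`d_r = u_l⁻¹ ∘ π⁻¹`; equivalently, `u_r ∘ d_l` and `u_l ∘ d_r` are two-sided
inverses of the kink map `π x = x ▷ x`. -/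
theorem kimura_downs_determined {X : Type*} (op inv : X → X → X)
    (h_left : ∀ x y, inv (op x y) y = x)
    (h_right : ∀ x y, op (inv x y) y = x)
    (h_dist : ∀ x y z, op (op x y) z = op (op x z) (op y z))
    (ul ur dl dr : X → X)
    (h_eq1 : ∀ x, dl (ur x) = ur (dl x))
    (h_eq2 : ∀ x, ur (dl x) = dr (ul x))
    (h_eq3 : ∀ x, dr (ul x) = ul (dr x))
    (h_kink : ∀ x, dr (ul (op x x)) = x)
    (h_ul : ∀ x y, ul (op x y) = op (ul x) y)
    (h_ur : ∀ x y, ur (op x y) = op (ur x) y)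
    (h_dl : ∀ x y, dl (op x y) = op (dl x) y)
    (h_dr : ∀ x y, dr (op x y) = op (dr x) y)
    (h_ul' : ∀ x y, op x (ul y) = op x y)
    (h_ur' : ∀ x y, op x (ur y) = op x y)
    (h_dl' : ∀ x y, op x (dl y) = op x y)
    (h_dr' : ∀ x y, op x (dr y) = op x y) :
    (∀ x, ur (dl (op x x)) = x) ∧
    (∀ x, op (ur (dl x)) (ur (dl x)) = x) ∧
    (∀ x, ul (dr (op x x)) = x) ∧
    (∀ x, op (ul (dr x)) (ul (dr x)) = x) := by
  have hA : ∀ x, ur (dl (op x x)) = x := fun x => (h_eq2 _).trans (h_kink x)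
  have hB : ∀ x, ul (dr (op x x)) = x := fun x => (h_eq3 _).symm.trans (h_kink x)
  refine ⟨hA, fun x => ?_, hB, fun x => ?_⟩
  · have h1 : op (ur (dl x)) x = x := by
      have := hA x
      rwa [h_dl, h_ur] at this
    calc op (ur (dl x)) (ur (dl x)) = op (ur (dl x)) x := by rw [h_ur', h_dl']
      _ = x := h1
  · have h1 : op (ul (dr x)) x = x := by
      have := hB x
      rwa [h_dr, h_ul] at this
    calc op (ul (dr x)) (ul (dr x)) = op (ul (dr x)) x := by rw [h_ul', h_dr']
      _ = x := h1
end

section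
/- Let X_σ be a permutation rack with a 4-Legendrian structure (u_l, u_r), and set d_l := u_r⁻¹σ⁻¹, d_r := u_l⁻¹σ⁻¹. Let W be any composition of U maps from {u_l, u_r} and D maps from {d_l, d_r} which alternates between the sets {u_l, d_l} and {u_r, d_r}, where D ≥ U ≥ 1 and D − U = 2r with r ≥ 0. Then W ∘ σ^w equals, for some choice, (d_l d_r)^r ∘ σ^{w−U} or (d_r d_l)^r ∘ σ^{w−U}, for every integer w. In particular, since u_l, u_r, d_l, d_r each commute with σ, W ∘ σ^w depends only on (U, D, w) and on whether the leftmost factor of W lies in {u_l, d_l} or {u_r, d_r}. -/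
/-- Letters for cusp maps: `(isUp, isLeft)`. `(true, true) ↦ u_l`,
`(true, false) ↦ u_r`, `(false, true) ↦ d_l`, `(false, false) ↦ d_r`. -/
def cuspInterp {X : Type*} (ul ur dl dr : Equiv.Perm X) :
    Bool × Bool → Equiv.Perm X
  | (true, true) => ul
  | (true, false) => ur
  | (false, true) => dl
  | (false, false) => dr

section Aux

variable {X : Type*} (σ ul ur dl dr : Equiv.Perm X)

lemma cusp_commute (hul : ul * σ = σ * ul) (hur : ur * σ = σ * ur)
    (hdl : dl = ur⁻¹ * σ⁻¹) (hdr : dr = ul⁻¹ * σ⁻¹) :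
    ∀ p : Bool × Bool, Commute σ (cuspInterp ul ur dl dr p) := by
  have cul : Commute σ ul := hul.symm
  have cur : Commute σ ur := hur.symm
  have cσ : Commute σ σ⁻¹ := (Commute.refl σ).inv_right
  rintro ⟨(_ | _), (_ | _)⟩
  · show Commute σ dr
    rw [hdr]; exact cul.inv_right.mul_right cσ
  · show Commute σ dl
    rw [hdl]; exact cur.inv_right.mul_right cσ
  · exact cur
  · exact cul

lemma cusp_pair (hul : ul * σ = σ * ul) (hur : ur * σ = σ * ur)
    (hdl : dl = ur⁻¹ * σ⁻¹) (hdr : dr = ul⁻¹ * σ⁻¹) :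
    ∀ a b : Bool × Bool, a.1 ≠ b.1 → a.2 ≠ b.2 →
      cuspInterp ul ur dl dr a * cuspInterp ul ur dl dr b = σ⁻¹ := by
  have cul : Commute σ ul := hul.symm
  have cur : Commute σ ur := hur.symm
  have hul' : σ⁻¹ * ul = ul * σ⁻¹ := cul.inv_left.eq
  have hur' : σ⁻¹ * ur = ur * σ⁻¹ := cur.inv_left.eq
  rintro ⟨a1, a2⟩ ⟨b1, b2⟩ h1 h2
  simp only [ne_eq] at h1 h2
  cases a1 <;> cases a2 <;> cases b1 <;> cases b2 <;>
    first
      | exact absurd rfl h1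
      | exact absurd rfl h2
      | skip
  · -- dr * ul
    show dr * ul = σ⁻¹
    rw [hdr, mul_assoc, hul', ← mul_assoc, inv_mul_cancel, one_mul]
  · -- dl * ur
    show dl * ur = σ⁻¹
    rw [hdl, mul_assoc, hur', ← mul_assoc, inv_mul_cancel, one_mul]
  · -- ur * dl
    show ur * dl = σ⁻¹
    rw [hdl, mul_inv_cancel_left]
  · -- ul * dr
    show ul * dr = σ⁻¹
    rw [hdr, mul_inv_cancel_left]

lemma down_prod_left :
    ∀ r (L : List (Bool × Bool)), (∀ p ∈ L, p.1 = false) →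
      L.Chain' (fun a b => a.2 ≠ b.2) → L.length = 2 * r →
      (∀ x ∈ L.head?, x.2 = true) →
      (L.map (cuspInterp ul ur dl dr)).prod = (dl * dr) ^ r := by
  intro r
  induction r with
  | zero =>
    intro L _ _ hlen _
    have : L = [] := List.length_eq_zero_iff.mp (by omega)
    subst this; simp
  | succ n ih =>
    intro L hall hch hlen hhd
    obtain ⟨a, t, rfl⟩ : ∃ a t, L = a :: t := by
      cases L with
      | nil => simp only [List.length_nil] at hlen; omega
      | cons a t => exact ⟨a, t, rfl⟩
    obtain ⟨b, t', rfl⟩ : ∃ b t', t = b :: t' := by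
      cases t with
      | nil => simp only [List.length_cons, List.length_nil] at hlen; omega
      | cons b t' => exact ⟨b, t', rfl⟩
    have ha1 : a.1 = false := hall a (by simp)
    have ha2 : a.2 = true := hhd a (by simp)
    have hb1 : b.1 = false := hall b (by simp)
    have hrel : a.2 ≠ b.2 := (List.isChain_cons_cons.mp hch).1
    have hb2 : b.2 = false := by
      cases hb : b.2
      · rfl
      · rw [ha2, hb] at hrel; exact absurd rfl hrel
    have ha : a = (false, true) := Prod.ext ha1 ha2
    have hb : b = (false, false) := Prod.ext hb1 hb2
    have hcht : (b :: t').Chain' (fun a b => a.2 ≠ b.2) := (List.isChain_cons_cons.mp hch).2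
    have hch' : t'.Chain' (fun a b => a.2 ≠ b.2) := hcht.tail
    have hhd' : ∀ x ∈ t'.head?, x.2 = true := by
      intro x hx
      have := (List.isChain_cons.mp hcht).1 x hx
      rw [hb2] at this
      cases hxx : x.2
      · rw [hxx] at this; exact absurd rfl this
      · rfl
    have hrest := ih t' (fun p hp => hall p (by simp [hp])) hch' (by simp at hlen; omega) hhd'
    subst ha hb
    simp only [List.map_cons, List.prod_cons]
    show dl * (dr * _) = _
    rw [hrest, pow_succ', mul_assoc]

lemma down_prod_right :
    ∀ r (L : List (Bool × Bool)), (∀ p ∈ L, p.1 = false) →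
      L.Chain' (fun a b => a.2 ≠ b.2) → L.length = 2 * r →
      (∀ x ∈ L.head?, x.2 = false) →
      (L.map (cuspInterp ul ur dl dr)).prod = (dr * dl) ^ r := by
  intro r
  induction r with
  | zero =>
    intro L _ _ hlen _
    have : L = [] := List.length_eq_zero_iff.mp (by omega)
    subst this; simp
  | succ n ih =>
    intro L hall hch hlen hhd
    obtain ⟨a, t, rfl⟩ : ∃ a t, L = a :: t := by
      cases L with
      | nil => simp only [List.length_nil] at hlen; omega
      | cons a t => exact ⟨a, t, rfl⟩
    obtain ⟨b, t', rfl⟩ : ∃ b t', t = b :: t' := by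
      cases t with
      | nil => simp only [List.length_cons, List.length_nil] at hlen; omega
      | cons b t' => exact ⟨b, t', rfl⟩
    have ha1 : a.1 = false := hall a (by simp)
    have ha2 : a.2 = false := hhd a (by simp)
    have hb1 : b.1 = false := hall b (by simp)
    have hrel : a.2 ≠ b.2 := (List.isChain_cons_cons.mp hch).1
    have hb2 : b.2 = true := by
      cases hb : b.2
      · rw [ha2, hb] at hrel; exact absurd rfl hrel
      · rfl
    have ha : a = (false, false) := Prod.ext ha1 ha2
    have hb : b = (false, true) := Prod.ext hb1 hb2
    have hcht : (b :: t').Chain' (fun a b => a.2 ≠ b.2) := (List.isChain_cons_cons.mp hch).2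
    have hch' : t'.Chain' (fun a b => a.2 ≠ b.2) := hcht.tail
    have hhd' : ∀ x ∈ t'.head?, x.2 = false := by
      intro x hx
      have := (List.isChain_cons.mp hcht).1 x hx
      rw [hb2] at this
      cases hxx : x.2
      · rfl
      · rw [hxx] at this; exact absurd rfl this
    have hrest := ih t' (fun p hp => hall p (by simp [hp])) hch' (by simp at hlen; omega) hhd'
    subst ha hb
    simp only [List.map_cons, List.prod_cons]
    show dr * (dl * _) = _
    rw [hrest, pow_succ', mul_assoc]

lemma find_adj : ∀ L : List (Bool × Bool),
    0 < L.countP (fun p => p.1) → 0 < L.countP (fun p => !p.1) →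
    ∃ (L1 L2 : List (Bool × Bool)) (a b : Bool × Bool),
      L = L1 ++ a :: b :: L2 ∧ a.1 ≠ b.1 := by
  intro L
  induction L with
  | nil => simp
  | cons x t ih =>
    intro h1 h2
    cases t with
    | nil =>
      cases hx : x.1 <;> simp [List.countP_cons, hx] at h1 h2
    | cons y t' =>
      by_cases hxy : x.1 = y.1
      · have h1' : 0 < (y :: t').countP (fun p => p.1) := by
          cases hy : y.1 with
          | true =>
            have : (y :: t').countP (fun p => p.1)
                = t'.countP (fun p => p.1) + 1 := by
              rw [List.countP_cons]; simp [hy]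
            omega
          | false =>
            have : (x :: y :: t').countP (fun p => p.1)
                = (y :: t').countP (fun p => p.1) := by
              rw [List.countP_cons (a := x)]; simp [hxy, hy]
            omega
        have h2' : 0 < (y :: t').countP (fun p => !p.1) := by
          cases hy : y.1 with
          | false =>
            have : (y :: t').countP (fun p => !p.1)
                = t'.countP (fun p => !p.1) + 1 := by
              rw [List.countP_cons]; simp [hy]
            omega
          | true =>
            have : (x :: y :: t').countP (fun p => !p.1)
                = (y :: t').countP (fun p => !p.1) := by
              rw [List.countP_cons (a := x)]; simp [hxy, hy]
            omega
        obtain ⟨L1, L2, a, b, he, hab⟩ := ih h1' h2'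
        exact ⟨x :: L1, L2, a, b, by rw [List.cons_append, he], hab⟩
      · exact ⟨[], t', x, y, rfl, hxy⟩

lemma chain'_remove (L1 L2 : List (Bool × Bool)) (a b : Bool × Bool)
    (h : (L1 ++ a :: b :: L2).Chain' (fun p q => p.2 ≠ q.2)) :
    (L1 ++ L2).Chain' (fun p q => p.2 ≠ q.2) := by
  replace h := List.isChain_append.mp h
  obtain ⟨h1, h2, h3⟩ := h
  have hab : a.2 ≠ b.2 := (List.isChain_cons_cons.mp h2).1
  have h2' : (b :: L2).Chain' (fun p q => p.2 ≠ q.2) := (List.isChain_cons_cons.mp h2).2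
  have hbL2 : ∀ y ∈ L2.head?, b.2 ≠ y.2 := (List.isChain_cons.mp h2').1
  refine List.isChain_append.mpr ⟨h1, h2'.tail, ?_⟩
  intro x hx y hy
  have hxa : x.2 ≠ a.2 := h3 x hx a rfl
  have hby : b.2 ≠ y.2 := hbL2 y hy
  simp only [ne_eq] at *
  cases hx2 : x.2 <;> cases hy2 : y.2 <;> cases ha2 : a.2 <;> cases hb2 : b.2 <;>
    simp_all

lemma main_red (hul : ul * σ = σ * ul) (hur : ur * σ = σ * ur)
    (hdl : dl = ur⁻¹ * σ⁻¹) (hdr : dr = ul⁻¹ * σ⁻¹) (r : ℕ) :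
    ∀ U (L : List (Bool × Bool)),
      L.countP (fun p => p.1) = U → L.countP (fun p => !p.1) = U + 2 * r →
      L.Chain' (fun a b => a.2 ≠ b.2) → ∀ w : ℤ,
      (L.map (cuspInterp ul ur dl dr)).prod * σ ^ w
          = (dl * dr) ^ r * σ ^ (w - (U : ℤ)) ∨
      (L.map (cuspInterp ul ur dl dr)).prod * σ ^ w
          = (dr * dl) ^ r * σ ^ (w - (U : ℤ)) := by
  intro U
  induction U with
  | zero =>
    intro L hcU hcD hch w
    have hall : ∀ p ∈ L, p.1 = false := by
      intro p hp
      have := List.countP_eq_zero.mp hcU p hp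
      simpa using this
    have hlen : L.length = 2 * r := by
      have : L.countP (fun p => !p.1) = L.length :=
        List.countP_eq_length.mpr (by intro a ha; simp [hall a ha])
      omega
    have hw : w - ((0 : ℕ) : ℤ) = w := by push_cast; ring
    rw [hw]
    cases L with
    | nil =>
      have hr : r = 0 := by simp at hlen; omega
      subst hr; left; simp
    | cons x t =>
      cases hx2 : x.2
      · right
        rw [down_prod_right ul ur dl dr r (x :: t) hall hch hlen
          (by intro y hy; simp at hy; rw [← hy]; exact hx2)]
      · left
        rw [down_prod_left ul ur dl dr r (x :: t) hall hch hlen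
          (by intro y hy; simp at hy; rw [← hy]; exact hx2)]
  | succ n ih =>
    intro L hcU hcD hch w
    obtain ⟨L1, L2, a, b, rfl, hab⟩ := find_adj L (by omega) (by omega)
    have hab2 : a.2 ≠ b.2 := by
      have h2 := (List.isChain_append.mp hch).2.1
      exact (List.isChain_cons_cons.mp h2).1
    have hfab : cuspInterp ul ur dl dr a * cuspInterp ul ur dl dr b = σ⁻¹ :=
      cusp_pair σ ul ur dl dr hul hur hdl hdr a b hab hab2
    have hcomm : ∀ p : Bool × Bool, Commute σ (cuspInterp ul ur dl dr p) :=
      cusp_commute σ ul ur dl dr hul hur hdl hdr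
    have hc2 : Commute σ⁻¹ ((L2.map (cuspInterp ul ur dl dr)).prod) := by
      refine Commute.inv_left ?_
      refine Commute.list_prod_right _ _ ?_
      intro x hx
      obtain ⟨p, _, rfl⟩ := List.mem_map.mp hx
      exact hcomm p
    have hprod : ((L1 ++ a :: b :: L2).map (cuspInterp ul ur dl dr)).prod
        = ((L1 ++ L2).map (cuspInterp ul ur dl dr)).prod * σ⁻¹ := by
      simp only [List.map_append, List.prod_append, List.map_cons, List.prod_cons]
      rw [← mul_assoc (cuspInterp ul ur dl dr a), hfab, hc2.eq, ← mul_assoc]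
    have hcU' : (L1 ++ L2).countP (fun p => p.1) = n := by
      simp only [List.countP_append, List.countP_cons] at hcU ⊢
      cases ha : a.1 <;> cases hb : b.1 <;> simp [ha, hb] at hcU hab ⊢ <;> omega
    have hcD' : (L1 ++ L2).countP (fun p => !p.1) = n + 2 * r := by
      simp only [List.countP_append, List.countP_cons] at hcD ⊢
      cases ha : a.1 <;> cases hb : b.1 <;> simp [ha, hb] at hcD hab ⊢ <;> omega
    have hch' := chain'_remove L1 L2 a b hch
    have hstep : ((L1 ++ a :: b :: L2).map (cuspInterp ul ur dl dr)).prod * σ ^ w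
        = ((L1 ++ L2).map (cuspInterp ul ur dl dr)).prod * σ ^ (w - 1) := by
      rw [hprod, mul_assoc, show (w : ℤ) - 1 = -1 + w by ring, zpow_add, zpow_neg_one]
    have hexp : w - 1 - (n : ℤ) = w - ((n + 1 : ℕ) : ℤ) := by push_cast; ring
    rcases ih (L1 ++ L2) hcU' hcD' hch' (w - 1) with h | h
    · left; rw [hstep, h, hexp]
    · right; rw [hstep, h, hexp]

end Aux

/-- Let `X_σ` be a permutation rack with 4-Legendrian structure `(u_l, u_r)`,
`d_l := u_r⁻¹σ⁻¹`, `d_r := u_l⁻¹σ⁻¹`. If `W` is a composition of `U ≥ 1` maps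
from `{u_l, u_r}` and `D = U + 2r` maps from `{d_l, d_r}`, alternating between
the left set `{u_l, d_l}` and the right set `{u_r, d_r}`, then for every
integer `w`, `W ∘ σ^w` equals `(d_l d_r)^r ∘ σ^{w-U}` or
`(d_r d_l)^r ∘ σ^{w-U}`. -/
theorem perm_rack_word_reduction {X : Type*} (σ ul ur : Equiv.Perm X)
    (hul : ul * σ = σ * ul) (hur : ur * σ = σ * ur)
    (dl dr : Equiv.Perm X)
    (hdl : dl = ur⁻¹ * σ⁻¹) (hdr : dr = ul⁻¹ * σ⁻¹)
    (U D r : ℕ) (hU : 1 ≤ U) (hD : D = U + 2 * r)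
    (L : List (Bool × Bool))
    (hcountU : L.countP (fun p => p.1) = U)
    (hcountD : L.countP (fun p => !p.1) = D)
    (halt : L.Chain' (fun a b => a.2 ≠ b.2)) :
    ∀ w : ℤ,
      (L.map (cuspInterp ul ur dl dr)).prod * σ ^ w
          = (dl * dr) ^ r * σ ^ (w - (U : ℤ)) ∨
      (L.map (cuspInterp ul ur dl dr)).prod * σ ^ w
          = (dr * dl) ^ r * σ ^ (w - (U : ℤ)) := by
  intro w
  exact main_red σ ul ur dl dr hul hur hdl hdr r U L hcountU (by omega) halt w
end
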